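/- (Speed of a radially free-falling Schwarzschild observer as seen by a stationary observer.) Let m > 0, a(r) = √(1 − 2m/r), 2m < r₁ < r₂, a₁ = a(r₁), a₂ = a(r₂), and let E ≥ a₁ with E > 0. Set W(r₁) = ((a₂² + a₁²)√(E² − a₁²) + E(a₂² − a₁²)) / ((a₂² − a₁²)√(E² − a₁²) + E(a₂² + a₁²)). Then 0 < W(r₁) < 1; moreover, for fixed r₂ and fixed E > 0, W(r₁) tends to 1 as r₁ → 2m from the right. -/

import Mathlib

noncomputable section

/-- The Schwarzschild lapse function `a(r) = √(1 − 2m/r)`. -/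
def lapse (m r : ℝ) : ℝ := Real.sqrt (1 - 2 * m / r)

/-- Speed of a radially free-falling Schwarzschild observer with energy
constant `E` at radius `r₁`, as observed by a stationary observer at radius
`r₂ > r₁`. -/
def fallSpeed (m r₂ E r₁ : ℝ) : ℝ :=
  ((lapse m r₂ ^ 2 + lapse m r₁ ^ 2) * Real.sqrt (E ^ 2 - lapse m r₁ ^ 2)
      + E * (lapse m r₂ ^ 2 - lapse m r₁ ^ 2)) /
  ((lapse m r₂ ^ 2 - lapse m r₁ ^ 2) * Real.sqrt (E ^ 2 - lapse m r₁ ^ 2)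
      + E * (lapse m r₂ ^ 2 + lapse m r₁ ^ 2))

/-- The speed of a radially free-falling observer seen by a stationary one is
positive and less than 1, and tends to 1 as `r₁ → 2m⁺`. -/
theorem schwarzschild_freefall_speed (m r₂ E : ℝ) (hm : 0 < m)
    (hr₂ : 2 * m < r₂) (hE : 0 < E) :
    (∀ r₁ : ℝ, 2 * m < r₁ → r₁ < r₂ → lapse m r₁ ≤ E →
      0 < fallSpeed m r₂ E r₁ ∧ fallSpeed m r₂ E r₁ < 1) ∧
    Filter.Tendsto (fun r₁ : ℝ => fallSpeed m r₂ E r₁)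
      (nhdsWithin (2 * m) (Set.Ioi (2 * m))) (nhds 1) := by
  have hr2pos : (0:ℝ) < r₂ := lt_trans (by linarith) hr₂
  have hA0 : 0 < 1 - 2 * m / r₂ := by
    rw [sub_pos, div_lt_one hr2pos]; exact hr₂
  have hA : lapse m r₂ ^ 2 = 1 - 2 * m / r₂ := Real.sq_sqrt hA0.le
  have hApos : 0 < lapse m r₂ ^ 2 := by rw [hA]; exact hA0
  constructor
  · intro r₁ h1 h2 hEr
    have hr1pos : 0 < r₁ := lt_trans (by linarith) h1
    have hB0 : 0 < 1 - 2 * m / r₁ := by rw [sub_pos, div_lt_one hr1pos]; exact h1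
    have hB : lapse m r₁ ^ 2 = 1 - 2 * m / r₁ := Real.sq_sqrt hB0.le
    have hBA : lapse m r₁ ^ 2 < lapse m r₂ ^ 2 := by
      rw [hA, hB]
      have : 2 * m / r₂ < 2 * m / r₁ :=
        div_lt_div_of_pos_left (by linarith) hr1pos h2
      linarith
    have hBpos : 0 < lapse m r₁ ^ 2 := by rw [hB]; exact hB0
    have hlnn : 0 ≤ lapse m r₁ := Real.sqrt_nonneg _
    have hBle : lapse m r₁ ^ 2 ≤ E ^ 2 := by nlinarith
    have hs_nonneg : 0 ≤ Real.sqrt (E ^ 2 - lapse m r₁ ^ 2) := Real.sqrt_nonneg _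
    have hsE : Real.sqrt (E ^ 2 - lapse m r₁ ^ 2) < E := by
      have h := Real.sqrt_lt_sqrt (by linarith)
        (show E ^ 2 - lapse m r₁ ^ 2 < E ^ 2 by linarith)
      rwa [Real.sqrt_sq hE.le] at h
    unfold fallSpeed
    set A := lapse m r₂ ^ 2 with hAdef
    set B := lapse m r₁ ^ 2 with hBdef
    set s := Real.sqrt (E ^ 2 - B) with hsdef
    have hden : 0 < (A - B) * s + E * (A + B) := by nlinarith
    refine ⟨div_pos (by nlinarith) hden, ?_⟩
    rw [div_lt_one hden]
    nlinarith
  · have hne : (2 * m : ℝ) ≠ 0 := by positivity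
    have h0 : lapse m (2 * m) = 0 := by
      unfold lapse
      rw [div_self hne]
      simp
    have hsqE : Real.sqrt (E ^ 2) = E := Real.sqrt_sq hE.le
    have hl : ContinuousAt (fun r : ℝ => lapse m r) (2 * m) := by
      unfold lapse
      exact Real.continuous_sqrt.continuousAt.comp
        (continuousAt_const.sub (continuousAt_const.div continuousAt_id hne))
    have hl2 : ContinuousAt (fun r : ℝ => lapse m r ^ 2) (2 * m) := hl.pow 2
    have hs : ContinuousAt (fun r : ℝ => Real.sqrt (E ^ 2 - lapse m r ^ 2)) (2 * m) :=
      Real.continuous_sqrt.continuousAt.comp (continuousAt_const.sub hl2)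
    have hnum : ContinuousAt (fun r₁ : ℝ =>
        (lapse m r₂ ^ 2 + lapse m r₁ ^ 2) * Real.sqrt (E ^ 2 - lapse m r₁ ^ 2)
          + E * (lapse m r₂ ^ 2 - lapse m r₁ ^ 2)) (2 * m) :=
      ((continuousAt_const.add hl2).mul hs).add
        (continuousAt_const.mul (continuousAt_const.sub hl2))
    have hdenc : ContinuousAt (fun r₁ : ℝ =>
        (lapse m r₂ ^ 2 - lapse m r₁ ^ 2) * Real.sqrt (E ^ 2 - lapse m r₁ ^ 2)
          + E * (lapse m r₂ ^ 2 + lapse m r₁ ^ 2)) (2 * m) :=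
      ((continuousAt_const.sub hl2).mul hs).add
        (continuousAt_const.mul (continuousAt_const.add hl2))
    have hdne : (lapse m r₂ ^ 2 - lapse m (2 * m) ^ 2)
          * Real.sqrt (E ^ 2 - lapse m (2 * m) ^ 2)
          + E * (lapse m r₂ ^ 2 + lapse m (2 * m) ^ 2) ≠ 0 := by
      rw [h0]
      norm_num [hsqE]
      positivity
    have hcont : ContinuousAt (fun r₁ : ℝ => fallSpeed m r₂ E r₁) (2 * m) := by
      unfold fallSpeed
      exact hnum.div hdenc hdne
    have hval : fallSpeed m r₂ E (2 * m) = 1 := by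
      unfold fallSpeed
      rw [h0]
      norm_num [hsqE]
      intro h
      nlinarith [mul_pos hApos hE]
    have := hcont.tendsto
    rw [hval] at this
    exact this.mono_left nhdsWithin_le_nhds
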